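/- Let X = (X_n : n ≥ 0) be an irreducible positive recurrent Markov chain on a countable state space S, let K ⊆ S be a finite nonempty set with return time T_K = inf{n ≥ 1 : X_n ∈ K}, and let π_K be the stationary distribution of the censored chain on K with transition matrix P_K(x,y) = P_x(X_{T_K} = y). Then for every nonnegative function r : S → [0,∞], the stationary distribution π of X satisfies (π r)·(E_{π_K} T_K) = E_{π_K} ∑_{j=0}^{T_K − 1} r(X_j). -/

import Mathlib

open MeasureTheory Filter
open scoped ENNReal Classical

/-- `n`-step transition probabilities of the kernel `P`. -/
noncomputable def kpow {S : Type*} (P : S → S → ℝ) : ℕ → S → S → ℝ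
  | 0 => fun x y => if x = y then 1 else 0
  | n + 1 => fun x y => ∑' z, kpow P n x z * P z y

/-- For a path `ω` and a set `C`, `cycleSum C r ω = ∑_{j=0}^{T_C - 1} r (ω j)`, where
`T_C = inf {n ≥ 1 : ω n ∈ C}` is the return time to `C`: the `j`-th term `r (ω j)` is
counted exactly when no time `i` with `1 ≤ i ≤ j` satisfies `ω i ∈ C`. -/
noncomputable def cycleSum {S : Type*} (C : Set S) (r : S → ℝ≥0∞) (ω : ℕ → S) : ℝ≥0∞ :=
  ∑' j : ℕ, if ∀ i, 1 ≤ i → i ≤ j → ω i ∉ C then r (ω j) else 0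

/-- The censored (process-on-`K`) transition probabilities:
`censored μ K x y = P_x (X_{T_K} = y)`, written as the sum over `n` of the probability
that the chain avoids `K` at times `1,…,n` and is at `y` at time `n+1`. -/
noncomputable def censored {S : Type*} [MeasurableSpace S]
    (μ : S → Measure (ℕ → S)) (K : Set S) (x y : S) : ℝ≥0∞ :=
  ∑' n : ℕ, μ x {ω | ω (n + 1) = y ∧ ∀ i, 1 ≤ i → i ≤ n → ω i ∉ K}

namespace Stmt2Aux

variable {S : Type*}

/-- `n`-step transition matrix in `ℝ≥0∞`. -/
noncomputable def pn (p : S → S → ℝ≥0∞) : ℕ → S → S → ℝ≥0∞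
  | 0 => fun x y => if x = y then 1 else 0
  | n + 1 => fun x y => ∑' z, pn p n x z * p z y

section Algebra

variable {p : S → S → ℝ≥0∞}

theorem pn_row (hrow : ∀ x, ∑' y, p x y = 1) : ∀ (n : ℕ) (x : S), ∑' y, pn p n x y = 1 := by
  intro n
  induction n with
  | zero =>
    intro x
    rw [show (∑' y, pn p 0 x y) = ∑' y, if x = y then 1 else 0 from rfl,
      tsum_eq_single x (fun y hy => if_neg (fun h => hy (h.symm)))]
    simp
  | succ n ih =>
    intro x
    calc ∑' y, pn p (n+1) x y = ∑' y, ∑' z, pn p n x z * p z y := rfl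
      _ = ∑' z, ∑' y, pn p n x z * p z y := ENNReal.tsum_comm
      _ = ∑' z, pn p n x z * ∑' y, p z y := by simp [ENNReal.tsum_mul_left]
      _ = ∑' z, pn p n x z := by simp [hrow]
      _ = 1 := ih x

theorem p_le_one (hrow : ∀ x, ∑' y, p x y = 1) (x y : S) : p x y ≤ 1 :=
  (hrow x) ▸ ENNReal.le_tsum y

theorem stat_iter {π : S → ℝ≥0∞} (hstat : ∀ y, ∑' x, π x * p x y = π y) :
    ∀ (n : ℕ) (y : S), ∑' x, π x * pn p n x y = π y := by
  intro n
  induction n with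
  | zero =>
    intro y
    rw [show (∑' x, π x * pn p 0 x y) = ∑' x, π x * if x = y then 1 else 0 from rfl,
      tsum_eq_single y (fun x hx => by simp [if_neg hx])]
    simp
  | succ n ih =>
    intro y
    calc ∑' x, π x * pn p (n+1) x y = ∑' x, ∑' z, π x * (pn p n x z * p z y) := by
          simp only [pn, ENNReal.tsum_mul_left]
      _ = ∑' z, ∑' x, π x * pn p n x z * p z y := by
          rw [ENNReal.tsum_comm]; simp [mul_assoc]
      _ = ∑' z, (∑' x, π x * pn p n x z) * p z y := by simp [ENNReal.tsum_mul_right]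
      _ = ∑' z, π z * p z y := by simp [ih]
      _ = π y := hstat y

/-- helper: pointwise `≤` plus reverse inequality of finite sums gives equality. -/
theorem all_eq_of_le_of_tsum_le {f g : S → ℝ≥0∞} (hle : ∀ i, f i ≤ g i)
    (hfin : ∑' i, g i ≠ ⊤) (hsum : ∑' i, g i ≤ ∑' i, f i) : ∀ i, f i = g i := by
  intro i
  by_contra hne
  have hlt : f i < g i := lt_of_le_of_ne (hle i) hne
  have hf : ∑' i, f i ≠ ⊤ := ne_top_of_le_ne_top hfin (ENNReal.tsum_le_tsum hle)
  exact absurd (lt_of_le_of_lt hsum (ENNReal.tsum_lt_tsum hf hle hlt)) (lt_irrefl _)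

theorem tsum_sub' {f g : S → ℝ≥0∞} (hg : ∑' i, g i ≠ ⊤) (hle : ∀ i, g i ≤ f i) :
    ∑' i, (f i - g i) = ∑' i, f i - ∑' i, g i := by
  have h : (∑' i, (f i - g i)) + ∑' i, g i = ∑' i, f i := by
    rw [← ENNReal.tsum_add]
    exact tsum_congr fun i => tsub_add_cancel_of_le (hle i)
  exact ENNReal.eq_sub_of_add_eq hg h

end Algebra

section Unique

variable {p : S → S → ℝ≥0∞}

theorem pi_le_one {π : S → ℝ≥0∞} (hπ1 : ∑' x, π x = 1) (x : S) : π x ≤ 1 :=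
  hπ1 ▸ ENNReal.le_tsum x

theorem pi_pos (hirr : ∀ x y : S, ∃ n, 0 < pn p n x y)
    {π : S → ℝ≥0∞} (hπ1 : ∑' x, π x = 1) (hstat : ∀ y, ∑' x, π x * p x y = π y)
    (y : S) : 0 < π y := by
  have hx : ∃ x, π x ≠ 0 := by
    by_contra h
    push_neg at h
    rw [(ENNReal.tsum_eq_zero).mpr h] at hπ1
    exact one_ne_zero hπ1.symm
  obtain ⟨x, hx⟩ := hx
  obtain ⟨n, hn⟩ := hirr x y
  have : π x * pn p n x y ≤ π y := (stat_iter hstat n y) ▸ ENNReal.le_tsum x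
  exact lt_of_lt_of_le (ENNReal.mul_pos hx hn.ne') this

/-- One-sided comparison of stationary distributions. -/
theorem stat_le (hrow : ∀ x, ∑' y, p x y = 1) (hirr : ∀ x y : S, ∃ n, 0 < pn p n x y)
    {π π' : S → ℝ≥0∞} (hπ1 : ∑' x, π x = 1) (hπ'1 : ∑' x, π' x = 1)
    (hstat : ∀ y, ∑' x, π x * p x y = π y) (hstat' : ∀ y, ∑' x, π' x * p x y = π' y)
    {y0 : S} (h0 : π y0 ≤ π' y0) : ∀ y, π y ≤ π' y := by
  classical
  set α : S → ℝ≥0∞ := fun z => min (π z) (π' z) with hα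
  have hαπ : ∀ z, α z ≤ π z := fun z => min_le_left _ _
  have hαπ' : ∀ z, α z ≤ π' z := fun z => min_le_right _ _
  -- α is stationary
  have hsub : ∀ y, ∑' x, α x * p x y ≤ α y := by
    intro y
    refine le_min ?_ ?_
    · exact (hstat y) ▸ ENNReal.tsum_le_tsum (fun x => mul_le_mul_left (hαπ x) _)
    · exact (hstat' y) ▸ ENNReal.tsum_le_tsum (fun x => mul_le_mul_left (hαπ' x) _)
  have htotal : ∑' y, ∑' x, α x * p x y = ∑' y, α y := by
    rw [ENNReal.tsum_comm]
    calc ∑' x, ∑' y, α x * p x y = ∑' x, α x * ∑' y, p x y := by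
          simp [ENNReal.tsum_mul_left]
      _ = ∑' x, α x := by simp [hrow]
  have hαfin : ∑' y, α y ≠ ⊤ := by
    refine ne_top_of_le_ne_top (hπ1 ▸ ENNReal.one_ne_top) ?_
    exact hπ1 ▸ ENNReal.tsum_le_tsum hαπ
  have hαstat : ∀ y, ∑' x, α x * p x y = α y :=
    all_eq_of_le_of_tsum_le hsub hαfin (le_of_eq htotal.symm)
  -- β := π - α is stationary
  set β : S → ℝ≥0∞ := fun z => π z - α z with hβ
  have hpfin : ∀ x y, p x y ≠ ⊤ := fun x y => ne_top_of_le_ne_top ENNReal.one_ne_top (p_le_one hrow x y)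
  have hβstat : ∀ y, ∑' x, β x * p x y = β y := by
    intro y
    have h1 : ∀ x, β x * p x y = π x * p x y - α x * p x y := by
      intro x
      exact ENNReal.sub_mul (fun _ _ => hpfin x y)
    have h2 : ∑' x, α x * p x y ≠ ⊤ := (hαstat y) ▸
      (ne_top_of_le_ne_top hαfin (ENNReal.le_tsum y))
    calc ∑' x, β x * p x y = ∑' x, (π x * p x y - α x * p x y) := tsum_congr h1
      _ = (∑' x, π x * p x y) - ∑' x, α x * p x y :=
          tsum_sub' h2 (fun x => mul_le_mul_left (hαπ x) _)
      _ = π y - α y := by rw [hstat y, hαstat y]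
  have hβiter : ∀ (n : ℕ) (y : S), ∑' x, β x * pn p n x y = β y := stat_iter hβstat
  -- β vanishes at y0
  have hβ0 : β y0 = 0 := by
    have : α y0 = π y0 := min_eq_left h0
    simp [hβ, this]
  -- hence β vanishes everywhere
  have hβall : ∀ z, β z = 0 := by
    intro z
    obtain ⟨n, hn⟩ := hirr z y0
    have hle : β z * pn p n z y0 ≤ β y0 := (hβiter n y0) ▸ ENNReal.le_tsum z
    rw [hβ0] at hle
    have := (mul_eq_zero.mp (le_zero_iff.mp hle))
    rcases this with h | h
    · exact h
    · exact absurd h hn.ne'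
  intro y
  have hπα : π y ≤ α y := tsub_eq_zero_iff_le.mp (hβall y)
  exact hπα.trans (hαπ' y)

theorem stat_unique (hrow : ∀ x, ∑' y, p x y = 1) (hirr : ∀ x y : S, ∃ n, 0 < pn p n x y)
    {π π' : S → ℝ≥0∞} (hπ1 : ∑' x, π x = 1) (hπ'1 : ∑' x, π' x = 1)
    (hstat : ∀ y, ∑' x, π x * p x y = π y) (hstat' : ∀ y, ∑' x, π' x * p x y = π' y) :
    ∀ y, π y = π' y := by
  rcases isEmpty_or_nonempty S with hS | hS
  · intro y; exact (hS.false y).elim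
  obtain ⟨y0⟩ := hS
  rcases le_total (π y0) (π' y0) with h0 | h0
  · have hle := stat_le hrow hirr hπ1 hπ'1 hstat hstat' h0
    exact all_eq_of_le_of_tsum_le hle (hπ'1 ▸ ENNReal.one_ne_top) (by rw [hπ1, hπ'1])
  · have hle := stat_le hrow hirr hπ'1 hπ1 hstat' hstat h0
    intro y
    exact (all_eq_of_le_of_tsum_le hle (hπ1 ▸ ENNReal.one_ne_top) (by rw [hπ1, hπ'1]) y).symm

end Unique

section Bridge

variable {P : S → S → ℝ}

theorem kpow_nonneg (hP0 : ∀ x y, 0 ≤ P x y) : ∀ (n : ℕ) (x y : S), 0 ≤ kpow P n x y := by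
  intro n
  induction n with
  | zero => intro x y; dsimp [kpow]; positivity
  | succ n ih =>
    intro x y
    exact tsum_nonneg fun z => mul_nonneg (ih x z) (hP0 z y)

theorem ofReal_row (hP0 : ∀ x y, 0 ≤ P x y) (hP1 : ∀ x, HasSum (P x) 1) (x : S) :
    ∑' y, ENNReal.ofReal (P x y) = 1 := by
  rw [← ENNReal.ofReal_tsum_of_nonneg (hP0 x) (hP1 x).summable, (hP1 x).tsum_eq]
  simp

theorem ofReal_kpow (hP0 : ∀ x y, 0 ≤ P x y) (hP1 : ∀ x, HasSum (P x) 1) :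
    ∀ (n : ℕ) (x y : S),
      ENNReal.ofReal (kpow P n x y) = pn (fun x y => ENNReal.ofReal (P x y)) n x y := by
  set p : S → S → ℝ≥0∞ := fun x y => ENNReal.ofReal (P x y) with hp
  have hrow : ∀ x, ∑' y, p x y = 1 := ofReal_row hP0 hP1
  intro n
  induction n with
  | zero =>
    intro x y
    by_cases h : x = y <;> simp [kpow, pn, h]
  | succ n ih =>
    intro x y
    have hfin : ∑' z, pn p n x z * p z y ≠ ⊤ := by
      refine ne_top_of_le_ne_top ENNReal.one_ne_top ?_
      calc ∑' z, pn p n x z * p z y ≤ ∑' z, pn p n x z * 1 :=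
            ENNReal.tsum_le_tsum fun z => mul_le_mul_right (p_le_one hrow z y) _
        _ = 1 := by simpa using pn_row hrow n x
    have hterm : ∀ z, pn p n x z * p z y = ENNReal.ofReal (kpow P n x z * P z y) := by
      intro z
      rw [ENNReal.ofReal_mul (kpow_nonneg hP0 n x z), ih x z]
    have hsummable : Summable fun z => kpow P n x z * P z y := by
      have h1 := ENNReal.summable_toReal hfin
      refine h1.congr fun z => ?_
      rw [hterm z, ENNReal.toReal_ofReal (mul_nonneg (kpow_nonneg hP0 n x z) (hP0 z y))]
    calc ENNReal.ofReal (kpow P (n+1) x y)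
        = ENNReal.ofReal (∑' z, kpow P n x z * P z y) := rfl
      _ = ∑' z, ENNReal.ofReal (kpow P n x z * P z y) :=
          ENNReal.ofReal_tsum_of_nonneg (fun z => mul_nonneg (kpow_nonneg hP0 n x z) (hP0 z y)) hsummable
      _ = ∑' z, pn p n x z * p z y := tsum_congr fun z => (hterm z).symm
      _ = pn p (n+1) x y := rfl

end Bridge

/-- `a` and `b` are not separated by any measurable set. -/
def rel [MeasurableSpace S] (a b : S) : Prop :=
  ∀ E : Set S, MeasurableSet E → (a ∈ E ↔ b ∈ E)

theorem rel_refl [MeasurableSpace S] (a : S) : rel a a := fun _ _ => Iff.rfl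
theorem rel_symm [MeasurableSpace S] {a b : S} (h : rel a b) : rel b a :=
  fun E hE => (h E hE).symm
theorem rel_trans [MeasurableSpace S] {a b c : S} (h : rel a b) (h' : rel b c) : rel a c :=
  fun E hE => (h E hE).trans (h' E hE)

theorem classSet_mble [MeasurableSpace S] [Countable S] (w : S) :
    MeasurableSet {w' | rel w' w} := by
  classical
  have hE : ∀ y : S, ∃ E : Set S, MeasurableSet E ∧ w ∈ E ∧ (¬ rel y w → y ∉ E) := by
    intro y
    by_cases h : rel y w
    · exact ⟨Set.univ, MeasurableSet.univ, trivial, fun h' => absurd h h'⟩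
    · have h2 : ∃ E : Set S, MeasurableSet E ∧ ¬(y ∈ E ↔ w ∈ E) := by
        by_contra hcon
        push_neg at hcon
        exact h fun E hEm => hcon E hEm
      obtain ⟨E, hEm, hEne⟩ := h2
      by_cases hyE : y ∈ E
      · have hwE : w ∉ E := fun hw => hEne ⟨fun _ => hw, fun _ => hyE⟩
        exact ⟨Eᶜ, hEm.compl, hwE, fun _ => not_not.mpr hyE⟩
      · have hwE : w ∈ E := by
          by_contra hw
          exact hEne ⟨fun hy => absurd hy hyE, fun hw' => absurd hw' hw⟩
        exact ⟨E, hEm, hwE, fun _ => hyE⟩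
  choose E hEm hEw hEsep using hE
  have hset : {w' | rel w' w} = ⋂ y, E y := by
    ext w'
    constructor
    · intro hrel
      refine Set.mem_iInter.mpr fun y => ?_
      exact (hrel (E y) (hEm y)).mpr (hEw y)
    · intro hmem
      by_contra hrel
      exact (hEsep w' hrel) (Set.mem_iInter.mp hmem w')
  rw [hset]
  exact MeasurableSet.iInter fun y => hEm y

/-- swap of two unseparated points -/
noncomputable def swp (a b : S) : S → S := fun w => if w = a then b else if w = b then a else w

theorem swp_preimage [MeasurableSpace S] {a b : S} (hab : rel a b) {E : Set S}
    (hE : MeasurableSet E) : swp a b ⁻¹' E = E := by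
  ext w
  simp only [Set.mem_preimage, swp]
  by_cases h1 : w = a
  · simp [h1, (hab E hE).symm]
  · by_cases h2 : w = b
    · by_cases h3 : b = a
      · simp [h1, h2, h3, hab E hE]
      · simp [h1, h2, h3, (hab E hE).symm]
    · simp [h1, h2]

theorem swp_self (a b w : S) : swp a b (swp a b w) = w := by
  classical
  simp only [swp]
  by_cases h1 : w = a
  · by_cases h2 : b = a <;> simp [h1, h2]
  · by_cases h2 : w = b
    · simp [h1, h2]
    · simp [h1, h2]

/-- swap applied at a single coordinate of path space -/
noncomputable def swpPath (a b : S) (k : ℕ) : (ℕ → S) → (ℕ → S) :=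
  fun ω => Function.update ω k (swp a b (ω k))

theorem swpPath_invol (a b : S) (k : ℕ) (ω : ℕ → S) : swpPath a b k (swpPath a b k ω) = ω := by
  funext i
  by_cases h : i = k
  · subst h
    simp [swpPath, Function.update_self, swp_self]
  · simp [swpPath, Function.update_of_ne h]

theorem swpPath_preimage [MeasurableSpace S] {a b : S} (hab : rel a b) (k : ℕ)
    {B : Set (ℕ → S)} (hB : MeasurableSet B) : swpPath a b k ⁻¹' B = B := by
  classical
  set m' : MeasurableSpace (ℕ → S) :=
    { MeasurableSet' := fun C => MeasurableSet C ∧ swpPath a b k ⁻¹' C = C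
      measurableSet_empty := ⟨MeasurableSet.empty, rfl⟩
      measurableSet_compl := fun C hC => ⟨hC.1.compl, by
        rw [Set.preimage_compl, hC.2]⟩
      measurableSet_iUnion := fun f hf => ⟨MeasurableSet.iUnion fun i => (hf i).1, by
        rw [Set.preimage_iUnion]
        exact Set.iUnion_congr fun i => (hf i).2⟩ } with hm'
  have hle : (MeasurableSpace.pi : MeasurableSpace (ℕ → S)) ≤ m' := by
    refine iSup_le fun i => ?_
    intro C hC
    obtain ⟨E, hEm, hEC⟩ := hC
    refine ⟨?_, ?_⟩
    · exact hEC ▸ (measurable_pi_apply i) hEm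
    · subst hEC
      ext ω
      simp only [Set.mem_preimage, swpPath]
      by_cases h : i = k
      · subst h
        rw [Function.update_self]
        have := swp_preimage hab hEm
        constructor
        · intro hmem
          have : swp a b (ω i) ∈ E := hmem
          rwa [← Set.mem_preimage, swp_preimage hab hEm] at this
        · intro hmem
          show swp a b (ω i) ∈ E
          rwa [← Set.mem_preimage, swp_preimage hab hEm]
      · rw [Function.update_of_ne (Ne.symm (fun hh => h hh.symm))]
  exact (hle B hB).2

theorem swpPath_measure_le [MeasurableSpace S] {a b : S} (hab : rel a b) (k : ℕ)
    (ν : Measure (ℕ → S)) (A : Set (ℕ → S)) : ν (swpPath a b k ⁻¹' A) ≤ ν A := by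
  rw [measure_eq_iInf A]
  refine le_iInf fun B => le_iInf fun hAB => le_iInf fun hB => ?_
  refine measure_mono ?_
  rw [← swpPath_preimage hab k hB]
  exact Set.preimage_mono hAB

theorem swpPath_measure [MeasurableSpace S] {a b : S} (hab : rel a b) (k : ℕ)
    (ν : Measure (ℕ → S)) (A : Set (ℕ → S)) : ν (swpPath a b k ⁻¹' A) = ν A := by
  refine le_antisymm (swpPath_measure_le hab k ν A) ?_
  have h2 := swpPath_measure_le hab k ν (swpPath a b k ⁻¹' A)
  have h3 : swpPath a b k ⁻¹' (swpPath a b k ⁻¹' A) = A := by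
    ext ω
    simp [Set.mem_preimage, swpPath_invol]
  rwa [h3] at h2


section Cyl

variable [MeasurableSpace S] (P : S → S → ℝ) (μ : S → Measure (ℕ → S))

theorem cyl_prod
    (hMarkov : ∀ (x : S) (n : ℕ) (s : ℕ → S),
      μ x {ω | ∀ i ≤ n + 1, ω i = s i}
        = μ x {ω | ∀ i ≤ n, ω i = s i} * ENNReal.ofReal (P (s n) (s (n + 1))))
    (x : S) (s : ℕ → S) (n : ℕ) :
    μ x {ω | ∀ i ≤ n, ω i = s i}
      = μ x {ω | ω 0 = s 0} * ∏ i ∈ Finset.range n, ENNReal.ofReal (P (s i) (s (i+1))) := by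
  induction n with
  | zero =>
    have : {ω : ℕ → S | ∀ i ≤ 0, ω i = s i} = {ω : ℕ → S | ω 0 = s 0} := by
      ext ω
      simp [Nat.le_zero]
    rw [this]
    simp
  | succ n ih =>
    rw [hMarkov x n s, ih, Finset.prod_range_succ, mul_assoc]

end Cyl


section Sep

variable [MeasurableSpace S]

theorem path_exists {P : S → S → ℝ} (hP0 : ∀ x y, 0 ≤ P x y) :
    ∀ (n : ℕ) (a b : S), 0 < kpow P n a b →
      ∃ s : ℕ → S, s 0 = a ∧ s n = b ∧ ∀ i < n, 0 < P (s i) (s (i+1)) := by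
  intro n
  induction n with
  | zero =>
    intro a b h
    by_cases hab : a = b
    · exact ⟨fun _ => a, rfl, hab, fun i hi => absurd hi (Nat.not_lt_zero i)⟩
    · simp [kpow, hab] at h
  | succ n ih =>
    intro a b h
    have hz : ∃ z, kpow P n a z * P z b ≠ 0 := by
      by_contra hc
      push_neg at hc
      have h0 : kpow P (n+1) a b = 0 := by
        show (∑' z, kpow P n a z * P z b) = 0
        rw [tsum_congr hc]
        exact tsum_zero
      rw [h0] at h
      exact lt_irrefl 0 h
    obtain ⟨z, hz⟩ := hz
    obtain ⟨h1, h2⟩ := mul_ne_zero_iff.mp hz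
    have hk : 0 < kpow P n a z := lt_of_le_of_ne (kpow_nonneg hP0 n a z) (Ne.symm h1)
    have hPzb : 0 < P z b := lt_of_le_of_ne (hP0 z b) (Ne.symm h2)
    obtain ⟨s, hs0, hsn, hpath⟩ := ih a z hk
    refine ⟨fun i => if i = n + 1 then b else s i, ?_, by simp, ?_⟩
    · show (if 0 = n + 1 then b else s 0) = a
      rw [if_neg (by omega : ¬ 0 = n + 1)]
      exact hs0
    intro i hi
    show 0 < P (if i = n + 1 then b else s i) (if i + 1 = n + 1 then b else s (i + 1))
    by_cases him : i = n
    · subst him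
      rw [if_neg (by omega : ¬ i = i + 1), if_pos rfl, hsn]
      exact hPzb
    · rw [if_neg (by omega : ¬ i = n + 1), if_neg (by omega : ¬ i + 1 = n + 1)]
      exact hpath i (by omega)

theorem sep [Countable S] (P : S → S → ℝ) (μ : S → Measure (ℕ → S))
    [∀ x, IsProbabilityMeasure (μ x)]
    (hP0 : ∀ x y, 0 ≤ P x y) (hP1 : ∀ x, HasSum (P x) 1)
    (hstart : ∀ x, μ x {ω | ω 0 = x} = 1)
    (hMarkov : ∀ (x : S) (n : ℕ) (s : ℕ → S),
      μ x {ω | ∀ i ≤ n + 1, ω i = s i}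
        = μ x {ω | ∀ i ≤ n, ω i = s i} * ENNReal.ofReal (P (s n) (s (n + 1))))
    (hirred : ∀ x y : S, ∃ n : ℕ, 0 < kpow P n x y) :
    ∀ a b : S, rel a b → a = b := by
  intro a b hab
  by_contra hne
  obtain ⟨n, hn⟩ := hirred a b
  obtain ⟨s, hs0, hsn, hpath⟩ := path_exists hP0 n a b hn
  obtain ⟨m, rfl⟩ : ∃ m, n = m + 1 := by
    cases n with
    | zero =>
      exfalso
      apply hne
      by_contra hne'
      simp [kpow, hne'] at hn
    | succ m => exact ⟨m, rfl⟩
  set p : S → S → ℝ≥0∞ := fun x y => ENNReal.ofReal (P x y) with hp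
  set z := s m with hzdef
  set C' : Set (ℕ → S) := {ω | ∀ i ≤ m, ω i = s i} with hC'
  set c' := μ a C' with hc'
  have hc'val : c' = ∏ i ∈ Finset.range m, p (s i) (s (i+1)) := by
    rw [hc', hC', cyl_prod P μ hMarkov a s m, hs0, hstart a, one_mul]
  have hc'pos : 0 < c' := by
    rw [hc'val]
    refine CanonicallyOrderedAdd.prod_pos.mpr fun i hi => ?_
    exact ENNReal.ofReal_pos.mpr (hpath i (by
      have := Finset.mem_range.mp hi; omega))
  have hc'ne : c' ≠ ⊤ := by rw [hc']; exact measure_ne_top _ _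
  -- point cylinder measures
  have hupd : ∀ (w : S), ∀ i ≤ m, Function.update s (m+1) w i = s i := by
    intro w i hi
    exact Function.update_of_ne (by omega) _ _
  have hpoint : ∀ w : S,
      μ a {ω | ∀ i ≤ m+1, ω i = Function.update s (m+1) w i} = c' * p z w := by
    intro w
    rw [cyl_prod P μ hMarkov a _ (m+1), Finset.prod_range_succ]
    rw [hupd w 0 (by omega), hs0, hstart a, one_mul]
    congr 1
    · rw [hc'val]
      refine Finset.prod_congr rfl fun i hi => ?_
      have him := Finset.mem_range.mp hi
      rw [hupd w i (by omega), hupd w (i+1) (by omega)]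
    · rw [hupd w m (le_refl m), Function.update_self, hzdef]
  -- merged cylinder measures
  have hkey : ∀ w : S, μ a (C' ∩ {ω | rel (ω (m+1)) w}) = c' * p z w := by
    intro w
    refine le_antisymm ?_ ?_
    · rw [← hpoint w]
      conv_rhs => rw [measure_eq_iInf]
      refine le_iInf fun B => le_iInf fun hPB => le_iInf fun hB => ?_
      refine measure_mono ?_
      intro ω hω
      obtain ⟨hω1, hω2⟩ := hω
      have hmem : swpPath (ω (m+1)) w (m+1) ω ∈ B := by
        apply hPB
        intro i hi
        by_cases him : i = m+1
        · subst him
          simp only [swpPath, Function.update_self, Function.update_self]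
          show swp (ω (m+1)) w (ω (m+1)) = w
          simp [swp]
        · have him' : i ≤ m := by omega
          show Function.update ω (m+1) (swp (ω (m+1)) w (ω (m+1))) i = _
          rw [Function.update_of_ne him, hupd w i him']
          exact hω1 i him'
      rw [← swpPath_preimage hω2 (m+1) hB]
      exact hmem
    · rw [← hpoint w]
      refine measure_mono ?_
      intro ω hω
      constructor
      · intro i hi
        rw [← hupd w i hi]
        exact hω i (by omega)
      · have hlast := hω (m+1) (le_refl _)
        rw [Function.update_self] at hlast
        show rel (ω (m+1)) w
        rw [hlast]
        exact rel_refl w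
  -- class partition
  letI sd : Setoid S := ⟨rel, ⟨rel_refl, fun h => rel_symm h, fun h h' => rel_trans h h'⟩⟩
  set U : Quotient sd → Set (ℕ → S) := fun c => {ω | rel (ω (m+1)) (Quotient.out c)} with hU
  have hUm : ∀ c, MeasurableSet (U c) := by
    intro c
    have h : MeasurableSet {w' : S | rel w' (Quotient.out c)} := classSet_mble _
    exact (measurable_pi_apply (m+1) : Measurable fun ω : ℕ → S => ω (m+1)) h
  have hUdisj : Pairwise (Function.onFun Disjoint U) := by
    intro c c' hcc
    refine Set.disjoint_left.mpr fun ω h1 h2 => hcc ?_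
    have e1 : (⟦ω (m+1)⟧ : Quotient sd) = ⟦Quotient.out c⟧ := Quotient.sound h1
    have e2 : (⟦ω (m+1)⟧ : Quotient sd) = ⟦Quotient.out c'⟧ := Quotient.sound h2
    rw [Quotient.out_eq] at e1 e2
    rw [← e1, ← e2]
  have hUuniv : (⋃ c, U c) = Set.univ := by
    refine Set.eq_univ_of_forall fun ω => ?_
    refine Set.mem_iUnion.mpr ⟨⟦ω (m+1)⟧, ?_⟩
    show rel (ω (m+1)) (Quotient.out ⟦ω (m+1)⟧)
    have h : (⟦ω (m+1)⟧ : Quotient sd) = ⟦(⟦ω (m+1)⟧ : Quotient sd).out⟧ :=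
      (Quotient.out_eq _).symm
    exact Quotient.exact h
  set t := ∑' c : Quotient sd, p z (Quotient.out c) with ht
  have hselfeq : c' = c' * t := by
    have h1 : ∑' c, (μ a).restrict C' (U c) = c' := by
      rw [← measure_iUnion hUdisj hUm, hUuniv, Measure.restrict_apply_univ]
    have h2 : ∀ c, (μ a).restrict C' (U c) = c' * p z (Quotient.out c) := by
      intro c
      rw [Measure.restrict_apply (hUm c), Set.inter_comm]
      exact hkey (Quotient.out c)
    calc c' = ∑' c, (μ a).restrict C' (U c) := h1.symm
      _ = ∑' c, c' * p z (Quotient.out c) := tsum_congr h2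
      _ = c' * t := ENNReal.tsum_mul_left
  have ht1 : t = 1 := by
    have h := hselfeq
    nth_rewrite 1 [← mul_one c'] at h
    exact ((ENNReal.mul_right_inj hc'pos.ne' hc'ne).mp h).symm
  -- the missing representative
  set b' := if Quotient.out (⟦a⟧ : Quotient sd) = a then b else a with hb'
  have hab' : (⟦a⟧ : Quotient sd) = ⟦b⟧ := Quotient.sound hab
  have hb'cls : (⟦b'⟧ : Quotient sd) = ⟦a⟧ := by
    rw [hb']
    split
    · exact hab'.symm
    · rfl
  have hb'ne : b' ≠ Quotient.out (⟦a⟧ : Quotient sd) := by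
    rw [hb']
    split
    · rename_i h; rw [h]; exact fun hh => hne hh.symm
    · rename_i h; exact fun hh => h hh.symm
  have hb'range : ∀ c : Quotient sd, Quotient.out c ≠ b' := by
    intro c hc
    have h1 : c = ⟦b'⟧ := by rw [← Quotient.out_eq c, hc]
    apply hb'ne
    rw [h1] at hc
    rw [← hc, hb'cls]
  -- p z b = p z a, both equal and positive
  have hpzb : 0 < p z b := by
    have := hpath m (by omega)
    rw [hsn] at this  -- ?
    exact ENNReal.ofReal_pos.mpr this
  have hpaeqb : p z a = p z b := by
    have hcls : {ω : ℕ → S | rel (ω (m+1)) a} = {ω : ℕ → S | rel (ω (m+1)) b} := by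
      ext ω
      exact ⟨fun h => rel_trans h hab, fun h => rel_trans h (rel_symm hab)⟩
    have h1 := hkey a
    have h2 := hkey b
    rw [hcls] at h1
    rw [h1] at h2
    exact (ENNReal.mul_right_inj hc'pos.ne' hc'ne).mp h2
  have hpzb' : 0 < p z b' := by
    rw [hb']
    split
    · exact hpzb
    · rw [hpaeqb]; exact hpzb
  -- row sum bound
  have hrow : (∑' w, p z w) = 1 := ofReal_row hP0 hP1 z
  have hbound : p z b' + t ≤ 1 := by
    rw [← hrow, ENNReal.tsum_eq_add_tsum_ite b']
    refine add_le_add_right ?_ _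
    rw [ht]
    refine ENNReal.summable.tsum_le_tsum_of_inj Quotient.out Quotient.out_injective
      (fun w _ => zero_le) (fun c => ?_) ENNReal.summable
    rw [if_neg (hb'range c)]
  rw [ht1, add_comm] at hbound
  have hzero : p z b' = 0 := by
    by_contra hne0
    exact absurd (lt_of_lt_of_le (ENNReal.lt_add_right ENNReal.one_ne_top hne0) hbound)
      (lt_irrefl _)
  exact absurd hzero hpzb'.ne'

end Sep


section Meas

variable [MeasurableSpace S] [Countable S]

/-- the event: at time `j` the path is at `y`, having avoided `K` at times `1,…,j`. -/
def Ev (K : Set S) (j : ℕ) (y : S) : Set (ℕ → S) :=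
  {ω | ω j = y ∧ ∀ i, 1 ≤ i → i ≤ j → ω i ∉ K}

theorem mble_eval (hA : ∀ A : Set S, MeasurableSet A) (j : ℕ) (T : Set S) :
    MeasurableSet {ω : ℕ → S | ω j ∈ T} :=
  (measurable_pi_apply j : Measurable fun ω : ℕ → S => ω j) (hA T)

theorem mble_Ev (hA : ∀ A : Set S, MeasurableSet A) (K : Set S) (j : ℕ) (y : S) :
    MeasurableSet (Ev K j y) := by
  have h : Ev K j y = {ω : ℕ → S | ω j ∈ ({y} : Set S)} ∩
      ⋂ i ∈ Set.Icc 1 j, {ω : ℕ → S | ω i ∈ Kᶜ} := by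
    ext ω
    simp only [Ev, Set.mem_setOf_eq, Set.mem_inter_iff, Set.mem_singleton_iff,
      Set.mem_iInter, Set.mem_Icc, Set.mem_compl_iff]
    constructor
    · rintro ⟨h1, h2⟩
      exact ⟨h1, fun i hi => h2 i hi.1 hi.2⟩
    · rintro ⟨h1, h2⟩
      exact ⟨h1, fun i hi1 hi2 => h2 i ⟨hi1, hi2⟩⟩
  rw [h]
  exact (mble_eval hA j _).inter
    (MeasurableSet.biInter (Set.to_countable _) fun i _ => mble_eval hA i _)

/-- initial cylinder on coordinates `0,…,k`. -/
def Cylv (k : ℕ) (v : Fin (k+1) → S) : Set (ℕ → S) :=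
  {ω | ∀ i : Fin (k+1), ω (i : ℕ) = v i}

/-- extension of a finite vector to an infinite path -/
def extv (k : ℕ) (v : Fin (k+1) → S) : ℕ → S :=
  fun i => if h : i < k+1 then v ⟨i, h⟩ else v 0

theorem extv_le (k : ℕ) (v : Fin (k+1) → S) (i : ℕ) (hi : i ≤ k) :
    extv k v i = v ⟨i, by omega⟩ := dif_pos (by omega)

theorem cylv_eq (k : ℕ) (v : Fin (k+1) → S) :
    Cylv k v = {ω | ∀ i ≤ k, ω i = extv k v i} := by
  ext ω
  constructor
  · intro hω i hi
    rw [extv_le k v i hi]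
    exact hω ⟨i, by omega⟩
  · intro hω i
    have h := hω (i : ℕ) (by omega)
    rw [extv_le k v i (by omega)] at h
    simpa using h

theorem mble_cylv (hA : ∀ A : Set S, MeasurableSet A) (k : ℕ) (v : Fin (k+1) → S) :
    MeasurableSet (Cylv k v) := by
  have h : Cylv k v = ⋂ i : Fin (k+1), {ω : ℕ → S | ω (i : ℕ) ∈ ({v i} : Set S)} := by
    ext ω
    simp [Cylv]
  rw [h]
  exact MeasurableSet.iInter fun i => mble_eval hA _ _

theorem cylv_disj (k : ℕ) : Pairwise (Function.onFun Disjoint (Cylv (S := S) k)) := by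
  intro v v' hvv
  refine Set.disjoint_left.mpr fun ω h1 h2 => hvv ?_
  funext i
  rw [← h1 i, ← h2 i]

variable (P : S → S → ℝ) (μ : S → Measure (ℕ → S))

/-- decomposition of a coordinate-determined event into cylinders -/
theorem dec (hA : ∀ A : Set S, MeasurableSet A) (x : S) (k : ℕ) (G : Set (ℕ → S))
    (hdep : ∀ ω ω', (∀ i ≤ k, ω i = ω' i) → (ω ∈ G ↔ ω' ∈ G)) :
    μ x G = ∑' v : Fin (k+1) → S, if extv k v ∈ G then μ x (Cylv k v) else 0 := by
  classical
  have hmm : ∀ (ω : ℕ → S), (∀ i ≤ k, ω i = extv k (fun j : Fin (k+1) => ω (j : ℕ)) i) := by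
    intro ω i hi
    rw [extv_le _ _ i hi]
  have hsplit : G = ⋃ v : Fin (k+1) → S, (if extv k v ∈ G then Cylv k v else ∅) := by
    ext ω
    constructor
    · intro hω
      refine Set.mem_iUnion.mpr ⟨fun j : Fin (k+1) => ω (j : ℕ), ?_⟩
      rw [if_pos ((hdep ω _ (hmm ω)).mp hω)]
      intro i
      rfl
    · intro hω
      obtain ⟨v, hv⟩ := Set.mem_iUnion.mp hω
      by_cases hg : extv k v ∈ G
      · rw [if_pos hg] at hv
        refine (hdep _ ω ?_).mp hg
        intro i hi
        rw [extv_le _ _ i hi]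
        exact (hv ⟨i, by omega⟩).symm
      · rw [if_neg hg] at hv
        exact absurd hv (Set.notMem_empty ω)
  have hdisj : Pairwise (Function.onFun Disjoint fun v : Fin (k+1) → S =>
      if extv k v ∈ G then Cylv k v else ∅) := by
    intro v v' hvv
    simp only [Function.onFun]
    split <;> split
    · exact cylv_disj k hvv
    · exact disjoint_bot_right
    · exact disjoint_bot_left
    · exact disjoint_bot_left
  have hmble : ∀ v : Fin (k+1) → S, MeasurableSet (if extv k v ∈ G then Cylv k v else ∅) := by
    intro v
    split
    · exact mble_cylv hA k v
    · exact MeasurableSet.empty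
  conv_lhs => rw [hsplit]
  rw [measure_iUnion hdisj hmble]
  refine tsum_congr fun v => ?_
  split
  · rfl
  · exact measure_empty

theorem cylstep
    (hMarkov : ∀ (x : S) (n : ℕ) (s : ℕ → S),
      μ x {ω | ∀ i ≤ n + 1, ω i = s i}
        = μ x {ω | ∀ i ≤ n, ω i = s i} * ENNReal.ofReal (P (s n) (s (n + 1))))
    (x : S) (k : ℕ) (v : Fin (k+1) → S) (y : S) :
    μ x (Cylv k v ∩ {ω | ω (k+1) = y})
      = μ x (Cylv k v) * ENNReal.ofReal (P (v (Fin.last k)) y) := by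
  set u : ℕ → S := Function.update (extv k v) (k+1) y with hu
  have hule : ∀ i ≤ k, u i = extv k v i := by
    intro i hi
    exact Function.update_of_ne (by omega) _ _
  have h1 : Cylv k v ∩ {ω | ω (k+1) = y} = {ω | ∀ i ≤ k+1, ω i = u i} := by
    rw [cylv_eq]
    ext ω
    constructor
    · rintro ⟨hc, hy⟩ i hi
      rcases Nat.lt_or_ge i (k+1) with h | h
      · rw [hule i (by omega)]
        exact hc i (by omega)
      · have hik : i = k+1 := by omega
        subst hik
        rw [hu, Function.update_self]
        exact hy
    · intro h
      constructor
      · intro i hi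
        rw [← hule i hi]
        exact h i (by omega)
      · have := h (k+1) le_rfl
        rwa [hu, Function.update_self] at this
  have h2 : μ x (Cylv k v) = μ x {ω | ∀ i ≤ k, ω i = u i} := by
    rw [cylv_eq]
    congr 1
    ext ω
    constructor
    · intro h i hi
      rw [hule i hi]
      exact h i hi
    · intro h i hi
      rw [← hule i hi]
      exact h i hi
  rw [h1, hMarkov x k u, ← h2]
  have e1 : u k = v (Fin.last k) := by
    rw [hule k le_rfl, extv_le k v k le_rfl]
    rfl
  have e2 : u (k+1) = y := by
    rw [hu]
    exact Function.update_self _ _ _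
  rw [e1, e2]

theorem markov_step (hA : ∀ A : Set S, MeasurableSet A)
    (hMarkov : ∀ (x : S) (n : ℕ) (s : ℕ → S),
      μ x {ω | ∀ i ≤ n + 1, ω i = s i}
        = μ x {ω | ∀ i ≤ n, ω i = s i} * ENNReal.ofReal (P (s n) (s (n + 1))))
    (x z y : S) (k : ℕ) (G : Set (ℕ → S))
    (hdep : ∀ ω ω', (∀ i ≤ k, ω i = ω' i) → (ω ∈ G ↔ ω' ∈ G))
    (hpin : ∀ ω ∈ G, ω k = z) :
    μ x (G ∩ {ω | ω (k+1) = y}) = μ x G * ENNReal.ofReal (P z y) := by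
  classical
  have hsplit : G ∩ {ω | ω (k+1) = y}
      = ⋃ v : Fin (k+1) → S,
          (if extv k v ∈ G then Cylv k v ∩ {ω | ω (k+1) = y} else ∅) := by
    ext ω
    constructor
    · rintro ⟨hg, hy⟩
      refine Set.mem_iUnion.mpr ⟨fun j : Fin (k+1) => ω (j : ℕ), ?_⟩
      have hmem : extv k (fun j : Fin (k+1) => ω (j : ℕ)) ∈ G := by
        refine (hdep ω _ ?_).mp hg
        intro i hi
        rw [extv_le _ _ i hi]
      rw [if_pos hmem]
      exact ⟨fun i => rfl, hy⟩
    · intro hω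
      obtain ⟨v, hv⟩ := Set.mem_iUnion.mp hω
      by_cases hg : extv k v ∈ G
      · rw [if_pos hg] at hv
        obtain ⟨hc, hy⟩ := hv
        refine ⟨(hdep _ ω ?_).mp hg, hy⟩
        intro i hi
        rw [extv_le _ _ i hi]
        exact (hc ⟨i, by omega⟩).symm
      · rw [if_neg hg] at hv
        exact absurd hv (Set.notMem_empty ω)
  have hdisj : Pairwise (Function.onFun Disjoint fun v : Fin (k+1) → S =>
      if extv k v ∈ G then Cylv k v ∩ {ω | ω (k+1) = y} else ∅) := by
    intro v v' hvv
    simp only [Function.onFun]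
    split <;> split
    · exact Disjoint.mono Set.inter_subset_left Set.inter_subset_left (cylv_disj k hvv)
    · exact disjoint_bot_right
    · exact disjoint_bot_left
    · exact disjoint_bot_left
  have hmble : ∀ v : Fin (k+1) → S,
      MeasurableSet (if extv k v ∈ G then Cylv k v ∩ {ω | ω (k+1) = y} else ∅) := by
    intro v
    split
    · exact (mble_cylv hA k v).inter (mble_eval hA (k+1) {y})
    · exact MeasurableSet.empty
  rw [hsplit, measure_iUnion hdisj hmble]
  have hterm : ∀ v : Fin (k+1) → S,
      μ x (if extv k v ∈ G then Cylv k v ∩ {ω | ω (k+1) = y} else ∅)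
        = (if extv k v ∈ G then μ x (Cylv k v) else 0) * ENNReal.ofReal (P z y) := by
    intro v
    split
    · rename_i hg
      rw [cylstep P μ hMarkov x k v y]
      have hz : v (Fin.last k) = z := by
        have := hpin _ hg
        rw [extv_le k v k le_rfl] at this
        rw [← this]
        rfl
      rw [hz]
    · simp
  rw [tsum_congr hterm, ENNReal.tsum_mul_right, ← dec μ hA x k G hdep]

theorem Ev_zero (hA : ∀ A : Set S, MeasurableSet A)
    (hstart : ∀ x, μ x {ω | ω 0 = x} = 1) [∀ x, IsProbabilityMeasure (μ x)]
    (K : Set S) (x y : S) :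
    μ x (Ev K 0 y) = if y = x then 1 else 0 := by
  have h1 : Ev K 0 y = {ω : ℕ → S | ω 0 ∈ ({y} : Set S)} := by
    ext ω
    constructor
    · rintro ⟨h, _⟩
      exact h
    · intro h
      exact ⟨h, fun i h1 h2 => absurd (le_trans h1 h2) (by omega)⟩
  rw [h1]
  split
  · rename_i h
    subst h
    exact hstart y
  · rename_i h
    have hsub : {ω : ℕ → S | ω 0 ∈ ({y} : Set S)} ⊆ ({ω : ℕ → S | ω 0 = x})ᶜ := by
      intro ω hω hx
      exact h ((hω : ω 0 = y) ▸ hx ▸ rfl)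
    refine le_antisymm ?_ zero_le
    refine le_trans (measure_mono hsub) ?_
    have hm : MeasurableSet {ω : ℕ → S | ω 0 = x} := mble_eval hA 0 {x}
    rw [measure_compl hm (measure_ne_top _ _), hstart x]
    simp

theorem Bv_eq (hA : ∀ A : Set S, MeasurableSet A)
    (hMarkov : ∀ (x : S) (n : ℕ) (s : ℕ → S),
      μ x {ω | ∀ i ≤ n + 1, ω i = s i}
        = μ x {ω | ∀ i ≤ n, ω i = s i} * ENNReal.ofReal (P (s n) (s (n + 1))))
    (K : Set S) (j : ℕ) (x y : S) :
    μ x {ω | ω (j + 1) = y ∧ ∀ i, 1 ≤ i → i ≤ j → ω i ∉ K}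
      = ∑' z, μ x (Ev K j z) * ENNReal.ofReal (P z y) := by
  have hsplit : {ω : ℕ → S | ω (j + 1) = y ∧ ∀ i, 1 ≤ i → i ≤ j → ω i ∉ K}
      = ⋃ z : S, (Ev K j z ∩ {ω | ω (j+1) = y}) := by
    ext ω
    constructor
    · rintro ⟨h1, h2⟩
      exact Set.mem_iUnion.mpr ⟨ω j, ⟨rfl, h2⟩, h1⟩
    · intro hω
      obtain ⟨z, ⟨⟨_, h2⟩, h3⟩⟩ := Set.mem_iUnion.mp hω
      exact ⟨h3, h2⟩
  have hdisj : Pairwise (Function.onFun Disjoint fun z : S => Ev K j z ∩ {ω | ω (j+1) = y}) := by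
    intro z z' hzz
    refine Set.disjoint_left.mpr fun ω h1 h2 => hzz ?_
    rw [← h1.1.1, ← h2.1.1]
  have hmble : ∀ z : S, MeasurableSet (Ev K j z ∩ {ω | ω (j+1) = y}) :=
    fun z => (mble_Ev hA K j z).inter (mble_eval hA (j+1) {y})
  rw [hsplit, measure_iUnion hdisj hmble]
  refine tsum_congr fun z => ?_
  refine markov_step P μ hA hMarkov x z y j (Ev K j z) ?_ ?_
  · intro ω ω' hiff
    simp only [Ev, Set.mem_setOf_eq]
    rw [hiff j le_rfl]
    constructor
    · rintro ⟨h1, h2⟩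
      exact ⟨h1, fun i hi1 hi2 => (hiff i hi2) ▸ h2 i hi1 hi2⟩
    · rintro ⟨h1, h2⟩
      exact ⟨h1, fun i hi1 hi2 => (hiff i hi2).symm ▸ h2 i hi1 hi2⟩
  · intro ω hω
    exact hω.1

theorem Ev_succ (K : Set S) (j : ℕ) (y : S) :
    Ev K (j+1) y = if y ∈ K then ∅
      else {ω | ω (j + 1) = y ∧ ∀ i, 1 ≤ i → i ≤ j → ω i ∉ K} := by
  split
  · rename_i hy
    ext ω
    simp only [Ev, Set.mem_setOf_eq, Set.mem_empty_iff_false, iff_false, not_and]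
    intro h1 h2
    exact (h2 (j+1) (by omega) le_rfl) (h1 ▸ hy)
  · rename_i hy
    ext ω
    simp only [Ev, Set.mem_setOf_eq]
    constructor
    · rintro ⟨h1, h2⟩
      exact ⟨h1, fun i hi1 hi2 => h2 i hi1 (by omega)⟩
    · rintro ⟨h1, h2⟩
      refine ⟨h1, fun i hi1 hi2 => ?_⟩
      rcases Nat.lt_or_ge i (j+1) with h | h
      · exact h2 i hi1 (by omega)
      · have : i = j+1 := by omega
        subst this
        rw [h1]
        exact hy

theorem lint_cycleSum (hA : ∀ A : Set S, MeasurableSet A)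
    (K : Set S) (r : S → ℝ≥0∞) (x : S) :
    ∫⁻ ω, cycleSum K r ω ∂ μ x = ∑' j, ∑' y, r y * μ x (Ev K j y) := by
  classical
  have hmr : Measurable r := fun t _ => hA _
  have hcond : ∀ j : ℕ, MeasurableSet {ω : ℕ → S | ∀ i, 1 ≤ i → i ≤ j → ω i ∉ K} := by
    intro j
    have h : {ω : ℕ → S | ∀ i, 1 ≤ i → i ≤ j → ω i ∉ K}
        = ⋂ i ∈ Set.Icc 1 j, {ω : ℕ → S | ω i ∈ Kᶜ} := by
      ext ω
      simp only [Set.mem_setOf_eq, Set.mem_iInter, Set.mem_Icc, Set.mem_compl_iff]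
      exact ⟨fun h i hi => h i hi.1 hi.2, fun h i h1 h2 => h i ⟨h1, h2⟩⟩
    rw [h]
    exact MeasurableSet.biInter (Set.to_countable _) fun i _ => mble_eval hA i _
  have hfmeas : ∀ j : ℕ, Measurable fun ω : ℕ → S =>
      if ∀ i, 1 ≤ i → i ≤ j → ω i ∉ K then r (ω j) else 0 := by
    intro j
    exact Measurable.ite (hcond j) (hmr.comp (measurable_pi_apply j)) measurable_const
  rw [show (fun ω => cycleSum K r ω)
      = fun ω => ∑' j : ℕ, if ∀ i, 1 ≤ i → i ≤ j → ω i ∉ K then r (ω j) else 0 from rfl,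
    lintegral_tsum fun j => (hfmeas j).aemeasurable]
  refine tsum_congr fun j => ?_
  have hpt : ∀ ω : ℕ → S, (if ∀ i, 1 ≤ i → i ≤ j → ω i ∉ K then r (ω j) else 0)
      = ∑' y, (Ev K j y).indicator (fun _ => r y) ω := by
    intro ω
    by_cases hc : ∀ i, 1 ≤ i → i ≤ j → ω i ∉ K
    · rw [if_pos hc]
      have hmem : ω ∈ Ev K j (ω j) := ⟨rfl, hc⟩
      have hz : ∀ y, y ≠ ω j → (Ev K j y).indicator (fun _ => r y) ω = 0 := by
        intro y hy
        refine Set.indicator_of_notMem (fun hmem2 => hy ?_) _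
        exact hmem2.1.symm
      exact ((tsum_eq_single (ω j) hz).trans (Set.indicator_of_mem hmem _)).symm
    · rw [if_neg hc]
      symm
      rw [ENNReal.tsum_eq_zero]
      intro y
      exact Set.indicator_of_notMem (fun hmem => hc hmem.2) _
  rw [lintegral_congr hpt, lintegral_tsum fun y =>
    ((measurable_const.indicator (mble_Ev hA K j y)).aemeasurable)]
  exact tsum_congr fun y => lintegral_indicator_const (mble_Ev hA K j y) (r y)

end Meas


section AllMble

variable [MeasurableSpace S] [Countable S]

theorem all_mble (P : S → S → ℝ) (μ : S → Measure (ℕ → S))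
    [∀ x, IsProbabilityMeasure (μ x)]
    (hP0 : ∀ x y, 0 ≤ P x y) (hP1 : ∀ x, HasSum (P x) 1)
    (hstart : ∀ x, μ x {ω | ω 0 = x} = 1)
    (hMarkov : ∀ (x : S) (n : ℕ) (s : ℕ → S),
      μ x {ω | ∀ i ≤ n + 1, ω i = s i}
        = μ x {ω | ∀ i ≤ n, ω i = s i} * ENNReal.ofReal (P (s n) (s (n + 1))))
    (hirred : ∀ x y : S, ∃ n : ℕ, 0 < kpow P n x y) :
    ∀ A : Set S, MeasurableSet A := by
  have hsep := sep P μ hP0 hP1 hstart hMarkov hirred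
  have hsingle : ∀ a : S, MeasurableSet ({a} : Set S) := by
    intro a
    have h : ({a} : Set S) = {w' | rel w' a} := by
      ext w'
      simp only [Set.mem_singleton_iff, Set.mem_setOf_eq]
      exact ⟨fun h => h ▸ rel_refl a, fun h => hsep w' a h⟩
    rw [h]
    exact classSet_mble a
  intro A
  letI : MeasurableSingletonClass S := ⟨hsingle⟩
  exact (Set.to_countable A).measurableSet

end AllMble

section Final

theorem swap3 {πK : S → ℝ≥0∞} {a : ℕ → S → S → ℝ≥0∞} (g : S → ℝ≥0∞) :
    ∑' x, πK x * ∑' j, ∑' y, g y * a j x y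
      = ∑' y, g y * ∑' x, πK x * ∑' j, a j x y := by
  calc ∑' x, πK x * ∑' j, ∑' y, g y * a j x y
      = ∑' x, ∑' j, ∑' y, πK x * (g y * a j x y) := by
        refine tsum_congr fun x => ?_
        rw [← ENNReal.tsum_mul_left]
        exact tsum_congr fun j => by rw [← ENNReal.tsum_mul_left]
    _ = ∑' x, ∑' y, ∑' j, πK x * (g y * a j x y) :=
        tsum_congr fun x => ENNReal.tsum_comm
    _ = ∑' y, ∑' x, ∑' j, πK x * (g y * a j x y) := ENNReal.tsum_comm
    _ = ∑' y, g y * ∑' x, πK x * ∑' j, a j x y := by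
        refine tsum_congr fun y => ?_
        have h2 : g y * ∑' x, πK x * ∑' j, a j x y
            = ∑' x, ∑' j, g y * (πK x * a j x y) := by
          rw [← ENNReal.tsum_mul_left]
          refine tsum_congr fun x => ?_
          rw [← ENNReal.tsum_mul_left, ← ENNReal.tsum_mul_left]
        rw [h2]
        exact tsum_congr fun x => tsum_congr fun j => by ring
    
theorem final_algebra {p : S → S → ℝ≥0∞} (hrow : ∀ x, ∑' y, p x y = 1)
    (hirr : ∀ x y : S, ∃ n, 0 < pn p n x y)
    {π πK : S → ℝ≥0∞} (hπ1 : ∑' x, π x = 1)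
    (hπstat : ∀ y, ∑' x, π x * p x y = π y)
    {K : Set S} (hπKsupp : ∀ x ∉ K, πK x = 0) (hπK1 : ∑' x, πK x = 1)
    {a : ℕ → S → S → ℝ≥0∞}
    (ha0 : ∀ x y, a 0 x y = if y = x then 1 else 0)
    (harec : ∀ j x y, a (j+1) x y = if y ∈ K then 0 else ∑' z, a j x z * p z y)
    (hπKstat : ∀ y ∈ K, ∑' x, πK x * (∑' j, ∑' z, a j x z * p z y) = πK y)
    (hfin : (∑' x, πK x * ∑' j, ∑' y, a j x y) ≠ ⊤)
    (r : S → ℝ≥0∞) :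
    (∑' y, π y * r y) * (∑' x, πK x * ∑' j, ∑' y, a j x y)
      = ∑' x, πK x * ∑' j, ∑' y, r y * a j x y := by
  classical
  set ν : S → ℝ≥0∞ := fun y => ∑' x, πK x * ∑' j, a j x y with hν
  have hswap : ∀ g : S → ℝ≥0∞,
      ∑' x, πK x * ∑' j, ∑' y, g y * a j x y = ∑' y, g y * ν y := fun g => swap3 g
  have hid : ∀ x, (∑' j, ∑' y, a j x y) = ∑' j, ∑' y, (fun _ : S => (1:ℝ≥0∞)) y * a j x y := by
    intro x
    exact tsum_congr fun j => tsum_congr fun y => (one_mul _).symm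
  have hνself : (∑' x, πK x * ∑' j, ∑' y, a j x y) = ∑' y, ν y := by
    calc (∑' x, πK x * ∑' j, ∑' y, a j x y)
        = ∑' x, πK x * ∑' j, ∑' y, (fun _ : S => (1:ℝ≥0∞)) y * a j x y :=
          tsum_congr fun x => by rw [hid x]
      _ = ∑' y, (fun _ : S => (1:ℝ≥0∞)) y * ν y := hswap _
      _ = ∑' y, ν y := tsum_congr fun y => one_mul _
  set νS := ∑' y, ν y with hνS
  have hνSfin : νS ≠ ⊤ := by
    have h := hfin
    rwa [hνself] at h
  have hδ : ∀ y, ∑' x, πK x * a 0 x y = πK y := by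
    intro y
    have h : ∀ x, x ≠ y → πK x * a 0 x y = 0 := by
      intro x hx
      rw [ha0, if_neg (fun h => hx h.symm), mul_zero]
    rw [tsum_eq_single y h, ha0, if_pos rfl, mul_one]
  have hνval : ∀ y, ν y = πK y + ∑' x, πK x * ∑' j, a (j+1) x y := by
    intro y
    calc ν y = ∑' x, πK x * (a 0 x y + ∑' j, a (j+1) x y) := by
          refine tsum_congr fun x => ?_
          rw [tsum_eq_zero_add' ENNReal.summable]
      _ = ∑' x, (πK x * a 0 x y + πK x * ∑' j, a (j+1) x y) := by
          refine tsum_congr fun x => mul_add _ _ _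
      _ = (∑' x, πK x * a 0 x y) + ∑' x, πK x * ∑' j, a (j+1) x y := ENNReal.tsum_add
      _ = πK y + ∑' x, πK x * ∑' j, a (j+1) x y := by rw [hδ y]
  have hstatν : ∀ y, ∑' x, ν x * p x y = ν y := by
    intro y
    have hD : ∑' w, ν w * p w y = ∑' x, πK x * ∑' j, ∑' z, a j x z * p z y := by
      calc ∑' w, ν w * p w y
          = ∑' w, ∑' x, (πK x * ∑' j, a j x w) * p w y := by
            refine tsum_congr fun w => ?_
            rw [hν]
            rw [ENNReal.tsum_mul_right]
        _ = ∑' x, ∑' w, (πK x * ∑' j, a j x w) * p w y := ENNReal.tsum_comm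
        _ = ∑' x, πK x * ∑' j, ∑' z, a j x z * p z y := by
            refine tsum_congr fun x => ?_
            calc ∑' w, (πK x * ∑' j, a j x w) * p w y
                = ∑' w, πK x * ∑' j, a j x w * p w y := by
                  refine tsum_congr fun w => ?_
                  rw [mul_assoc, ENNReal.tsum_mul_right]
              _ = πK x * ∑' w, ∑' j, a j x w * p w y := ENNReal.tsum_mul_left
              _ = πK x * ∑' j, ∑' z, a j x z * p z y := by rw [ENNReal.tsum_comm]
    by_cases hy : y ∈ K
    · rw [hD, hπKstat y hy, hνval y]
      have hzero : ∑' x, πK x * ∑' j, a (j+1) x y = 0 := by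
        rw [ENNReal.tsum_eq_zero]
        intro x
        have h : ∑' j, a (j+1) x y = 0 := by
          rw [ENNReal.tsum_eq_zero]
          intro j
          rw [harec, if_pos hy]
        rw [h, mul_zero]
      rw [hzero, add_zero]
    · rw [hD, hνval y, hπKsupp y hy, zero_add]
      refine tsum_congr fun x => ?_
      congr 1
      refine tsum_congr fun j => ?_
      rw [harec, if_neg hy]
  have hνge : ∀ y, πK y ≤ ν y := by
    intro y
    rw [hνval y]
    exact le_add_right (le_refl _)
  have hνS1 : 1 ≤ νS := by
    rw [hνS, ← hπK1]
    exact ENNReal.tsum_le_tsum hνge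
  have hνS0 : νS ≠ 0 := fun h => by simp [h] at hνS1
  -- normalized ν is a stationary distribution
  set π' : S → ℝ≥0∞ := fun y => ν y * νS⁻¹ with hπ'
  have hπ'1 : ∑' y, π' y = 1 := by
    simp only [hπ']
    rw [ENNReal.tsum_mul_right, ← hνS, ENNReal.mul_inv_cancel hνS0 hνSfin]
  have hπ'stat : ∀ y, ∑' x, π' x * p x y = π' y := by
    intro y
    simp only [hπ']
    calc ∑' x, ν x * νS⁻¹ * p x y = ∑' x, ν x * p x y * νS⁻¹ := by
          refine tsum_congr fun x => by ring
      _ = (∑' x, ν x * p x y) * νS⁻¹ := ENNReal.tsum_mul_right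
      _ = ν y * νS⁻¹ := by rw [hstatν y]
  have huniq := stat_unique hrow hirr hπ1 hπ'1 hπstat hπ'stat
  have hνy : ∀ y, ν y = π y * νS := by
    intro y
    rw [huniq y]
    simp only [hπ']
    rw [mul_assoc, ENNReal.inv_mul_cancel hνS0 hνSfin, mul_one]
  calc (∑' y, π y * r y) * (∑' x, πK x * ∑' j, ∑' y, a j x y)
      = (∑' y, π y * r y) * νS := by rw [hνself]
    _ = ∑' y, π y * r y * νS := ENNReal.tsum_mul_right.symm
    _ = ∑' y, r y * ν y := by
        refine tsum_congr fun y => ?_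
        rw [hνy y]
        ring
    _ = ∑' x, πK x * ∑' j, ∑' y, r y * a j x y := (hswap r).symm

end Final

end Stmt2Aux

/-- Ratio representation (2.1): for an irreducible positive recurrent chain with
stationary distribution `π`, a finite nonempty return set `K`, and the stationary
distribution `π_K` of the censored chain on `K`,
`(π r) ⬝ E_{π_K} T_K = E_{π_K} ∑_{j=0}^{T_K-1} r (X_j)` for every `r : S → [0,∞]`. -/
theorem stmt2 {S : Type*} [Countable S] [MeasurableSpace S]
    (P : S → S → ℝ) (μ : S → Measure (ℕ → S)) [∀ x, IsProbabilityMeasure (μ x)]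
    (hP0 : ∀ x y, 0 ≤ P x y) (hP1 : ∀ x, HasSum (P x) 1)
    (hstart : ∀ x, μ x {ω | ω 0 = x} = 1)
    (hMarkov : ∀ (x : S) (n : ℕ) (s : ℕ → S),
      μ x {ω | ∀ i ≤ n + 1, ω i = s i}
        = μ x {ω | ∀ i ≤ n, ω i = s i} * ENNReal.ofReal (P (s n) (s (n + 1))))
    (hirred : ∀ x y : S, ∃ n : ℕ, 0 < kpow P n x y)
    (hposrec : ∀ x : S, (∫⁻ ω, cycleSum {x} (fun _ => 1) ω ∂ μ x) ≠ ∞)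
    (π : S → ℝ≥0∞) (hπ1 : ∑' x, π x = 1)
    (hπstat : ∀ y, ∑' x, π x * ENNReal.ofReal (P x y) = π y)
    (K : Set S) (hKfin : K.Finite) (hKne : K.Nonempty)
    (πK : S → ℝ≥0∞) (hπKsupp : ∀ x ∉ K, πK x = 0) (hπK1 : ∑' x, πK x = 1)
    (hπKstat : ∀ y ∈ K, ∑' x, πK x * censored μ K x y = πK y)
    (r : S → ℝ≥0∞) :
    (∑' y, π y * r y) * (∑' x, πK x * ∫⁻ ω, cycleSum K (fun _ => 1) ω ∂ μ x)
      = ∑' x, πK x * ∫⁻ ω, cycleSum K r ω ∂ μ x := by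
    classical
  have hA : ∀ A : Set S, MeasurableSet A :=
    Stmt2Aux.all_mble P μ hP0 hP1 hstart hMarkov hirred
  have hrow : ∀ x, ∑' y, ENNReal.ofReal (P x y) = 1 := Stmt2Aux.ofReal_row hP0 hP1
  have hirr : ∀ x y : S, ∃ n, 0 < Stmt2Aux.pn (fun x y => ENNReal.ofReal (P x y)) n x y := by
    intro x y
    obtain ⟨n, hn⟩ := hirred x y
    refine ⟨n, ?_⟩
    rw [← Stmt2Aux.ofReal_kpow hP0 hP1 n x y]
    exact ENNReal.ofReal_pos.mpr hn
  have ha0 : ∀ x y : S, μ x (Stmt2Aux.Ev K 0 y) = if y = x then 1 else 0 :=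
    fun x y => Stmt2Aux.Ev_zero μ hA hstart K x y
  have harec : ∀ (j : ℕ) (x y : S), μ x (Stmt2Aux.Ev K (j+1) y)
      = if y ∈ K then 0 else ∑' z, μ x (Stmt2Aux.Ev K j z) * ENNReal.ofReal (P z y) := by
    intro j x y
    rw [Stmt2Aux.Ev_succ K j y]
    split
    · exact measure_empty
    · exact Stmt2Aux.Bv_eq P μ hA hMarkov K j x y
  have hcens : ∀ x y : S, censored μ K x y
      = ∑' j, ∑' z, μ x (Stmt2Aux.Ev K j z) * ENNReal.ofReal (P z y) := by
    intro x y
    exact tsum_congr fun n => Stmt2Aux.Bv_eq P μ hA hMarkov K n x y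
  have hπKstat' : ∀ y ∈ K,
      ∑' x, πK x * (∑' j, ∑' z, μ x (Stmt2Aux.Ev K j z) * ENNReal.ofReal (P z y)) = πK y := by
    intro y hy
    rw [← hπKstat y hy]
    exact tsum_congr fun x => by rw [hcens x y]
  have hLI : ∀ (r' : S → ℝ≥0∞) (x : S),
      ∫⁻ ω, cycleSum K r' ω ∂ μ x = ∑' j, ∑' y, r' y * μ x (Stmt2Aux.Ev K j y) :=
    fun r' x => Stmt2Aux.lint_cycleSum μ hA K r' x
  have hone : ∀ x : S, (∫⁻ ω, cycleSum K (fun _ => 1) ω ∂ μ x)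
      = ∑' j, ∑' y, μ x (Stmt2Aux.Ev K j y) := by
    intro x
    rw [hLI (fun _ => 1) x]
    exact tsum_congr fun j => tsum_congr fun y => one_mul _
  have hfin : (∑' x, πK x * ∑' j, ∑' y, μ x (Stmt2Aux.Ev K j y)) ≠ ⊤ := by
    have hbx : ∀ x ∈ K, (∫⁻ ω, cycleSum K (fun _ => 1) ω ∂ μ x) ≠ ⊤ := by
      intro x hx
      refine ne_top_of_le_ne_top (hposrec x) (lintegral_mono fun ω => ?_)
      refine ENNReal.tsum_le_tsum fun j => ?_
      by_cases h1 : ∀ i, 1 ≤ i → i ≤ j → ω i ∉ K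
      · have h2 : ∀ i, 1 ≤ i → i ≤ j → ω i ∉ ({x} : Set S) := by
          intro i hi1 hi2 hmem
          rw [Set.mem_singleton_iff] at hmem
          exact (h1 i hi1 hi2) (hmem ▸ hx)
        rw [if_pos h1, if_pos h2]
      · rw [if_neg h1]
        exact zero_le
    have hterm0 : ∀ x ∉ hKfin.toFinset,
        πK x * ∑' j, ∑' y, μ x (Stmt2Aux.Ev K j y) = 0 := by
      intro x hx
      rw [hπKsupp x (by simpa using hx), zero_mul]
    rw [tsum_eq_sum hterm0]
    refine ENNReal.sum_ne_top.mpr fun x hx => ?_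
    have hxK : x ∈ K := by simpa using hx
    refine ENNReal.mul_ne_top ?_ ?_
    · exact ne_top_of_le_ne_top ENNReal.one_ne_top (Stmt2Aux.pi_le_one hπK1 x)
    · rw [← hone x]
      exact hbx x hxK
  have hmain := Stmt2Aux.final_algebra (a := fun j x y => μ x (Stmt2Aux.Ev K j y))
    hrow hirr hπ1 hπstat hπKsupp hπK1 ha0 harec hπKstat' hfin r
  have e1 : (∑' x, πK x * ∫⁻ ω, cycleSum K (fun _ => 1) ω ∂ μ x)
      = ∑' x, πK x * ∑' j, ∑' y, μ x (Stmt2Aux.Ev K j y) :=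
    tsum_congr fun x => by rw [hone x]
  have e2 : (∑' x, πK x * ∫⁻ ω, cycleSum K r ω ∂ μ x)
      = ∑' x, πK x * ∑' j, ∑' y, r y * μ x (Stmt2Aux.Ev K j y) :=
    tsum_congr fun x => by rw [hLI r x]
  rw [e1, e2]
  exact hmain
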